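/- Staircase dimension count, strict case: With notation as above, if ε_α > 1 for some α with 1 ≤ α < k, then the cardinality of M(I,ε) is strictly greater than 2n − 2. -/
import Mathlib


open scoped Classical

/-- `j_α = i_{α−1} − ε_{α−1}`. -/
def jidx (i ε : ℕ → ℕ) (α : ℕ) : ℕ := i (α - 1) - ε (α - 1)

/-- The set `M(I,ε)` of matrix positions: for each `α = 1..k`, the positions
`(r, j_α)` with `j_α ≤ r ≤ i_α`, together with the positions `(i_α, c)` with
`j_α < c < i_α` and `c ∉ {j_β : β < α, j_β < i_α}`. -/
noncomputable def Mset (k : ℕ) (i ε : ℕ → ℕ) : Finset (ℕ × ℕ) :=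
  (Finset.Icc 1 k).biUnion fun α =>
    ((Finset.Icc (jidx i ε α) (i α)).image fun r => (r, jidx i ε α)) ∪
      (((Finset.Ioo (jidx i ε α) (i α)).filter fun c =>
          ∀ β ∈ Finset.Ico 1 α, ¬(jidx i ε β < i α ∧ c = jidx i ε β)).image
        fun c => (i α, c))

/-- Column part: positions `(r, j_α)` for `j_α ≤ r ≤ i_α`. -/
noncomputable def Scol (i ε : ℕ → ℕ) (α : ℕ) : Finset (ℕ × ℕ) :=
  (Finset.Icc (jidx i ε α) (i α)).image fun r => (r, jidx i ε α)

/-- Reduced row part: positions `(i_α, c)` with `j_α < c < i_α` and `c` avoiding *all* `j_β`. -/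
noncomputable def Trow (k : ℕ) (i ε : ℕ → ℕ) (α : ℕ) : Finset (ℕ × ℕ) :=
  ((Finset.Ioo (jidx i ε α) (i α)).filter fun c =>
      ∀ β ∈ Finset.Icc 1 k, c ≠ jidx i ε β).image fun c => (i α, c)

theorem staircase_card_gt (n k : ℕ) (i ε : ℕ → ℕ) (hk : 1 ≤ k)
    (hi0 : i 0 = 1) (hik : i k = n) (hε0 : ε 0 = 0)
    (hchain : ∀ α, 1 ≤ α → α < k → i (α - 1) + ε α < i α)
    (hlast : i (k - 1) < i k)
    (hε : ∃ α, 1 ≤ α ∧ α < k ∧ 1 < ε α) :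
    2 * n - 2 < (Mset k i ε).card := by
  -- step monotonicity of i
  have hstep : ∀ a, a < k → i a < i (a + 1) := by
    intro a ha
    rcases eq_or_lt_of_le (Nat.succ_le_of_lt ha) with h | h
    · have h' := hlast
      rw [← h] at h'
      simpa using h'
    · have h' := hchain (a + 1) (by omega) h
      simp only [Nat.add_sub_cancel] at h'
      omega
  have hmonod : ∀ d a, a + d ≤ k → i a ≤ i (a + d) := by
    intro d
    induction d with
    | zero => intro a _; simp
    | succ m ih =>
      intro a h
      have h2 := hstep (a + m) (by omega)
      have h3 := ih a (by omega)
      have h4 : a + (m + 1) = a + m + 1 := by omega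
      rw [h4]
      omega
  have hle : ∀ a b, a ≤ b → b ≤ k → i a ≤ i b := by
    intro a b hab hbk
    obtain ⟨d, rfl⟩ := Nat.exists_eq_add_of_le hab
    exact hmonod d a hbk
  have hlt : ∀ a b, a < b → b ≤ k → i a < i b := by
    intro a b hab hbk
    have h1 := hstep a (by omega)
    have h2 := hle (a + 1) b (by omega) hbk
    omega
  -- step monotonicity of j on [1,k]
  have hjstep : ∀ a, 1 ≤ a → a < k → jidx i ε a < jidx i ε (a + 1) := by
    intro a h1 h2
    have hc := hchain a h1 h2
    have e1 : jidx i ε (a + 1) = i a - ε a := by simp [jidx]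
    have e2 : jidx i ε a = i (a - 1) - ε (a - 1) := rfl
    omega
  have hjmonod : ∀ d a, 1 ≤ a → a + d ≤ k → jidx i ε a ≤ jidx i ε (a + d) := by
    intro d
    induction d with
    | zero => intro a _ _; simp
    | succ m ih =>
      intro a h1 h
      have h2 := hjstep (a + m) (by omega) (by omega)
      have h3 := ih a h1 (by omega)
      have h4 : a + (m + 1) = a + m + 1 := by omega
      rw [h4]
      omega
  have hjle : ∀ a b, 1 ≤ a → a ≤ b → b ≤ k → jidx i ε a ≤ jidx i ε b := by
    intro a b h1 hab hbk
    obtain ⟨d, rfl⟩ := Nat.exists_eq_add_of_le hab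
    exact hjmonod d a h1 hbk
  have hjlt : ∀ a b, 1 ≤ a → a < b → b ≤ k → jidx i ε a < jidx i ε b := by
    intro a b h1 hab hbk
    have h2 := hjstep a h1 (by omega)
    have h3 := hjle (a + 1) b (by omega) (by omega) hbk
    omega
  -- j_α < i_α on [1,k]
  have hji : ∀ α, 1 ≤ α → α ≤ k → jidx i ε α < i α := by
    intro α h1 h2
    have h3 : jidx i ε α ≤ i (α - 1) := Nat.sub_le _ _
    have h4 := hlt (α - 1) α (by omega) h2
    omega
  -- ε_β ≤ i_β for β < k
  have hεi : ∀ β, β < k → ε β ≤ i β := by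
    intro β hβ
    rcases Nat.eq_zero_or_pos β with h | h
    · subst h; omega
    · have := hchain β h hβ; omega
  -- the "excess" count
  set e : ℕ → ℕ := fun α => if α < k ∧ 1 ≤ ε α then 1 else 0 with he
  -- cardinality of the column part
  have hSinj : ∀ α, Function.Injective fun r => ((r, jidx i ε α) : ℕ × ℕ) := by
    intro α a b h
    simpa using congrArg Prod.fst h
  have hScard : ∀ α, (Scol i ε α).card = i α + 1 - jidx i ε α := by
    intro α
    rw [Scol, Finset.card_image_of_injective _ (hSinj α), Nat.card_Icc]
  -- membership facts
  have hSmem : ∀ α x, x ∈ Scol i ε α → x.2 = jidx i ε α := by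
    intro α x hx
    rw [Scol, Finset.mem_image] at hx
    obtain ⟨r, _, rfl⟩ := hx
    rfl
  have hTmem : ∀ α x, x ∈ Trow k i ε α →
      x.1 = i α ∧ ∀ β ∈ Finset.Icc 1 k, x.2 ≠ jidx i ε β := by
    intro α x hx
    simp only [Trow, Finset.mem_image, Finset.mem_filter] at hx
    obtain ⟨c, ⟨_, hcP⟩, rfl⟩ := hx
    exact ⟨rfl, hcP⟩
  -- lower bound on the row part
  have hTcard : ∀ α, 1 ≤ α → α ≤ k →
      i α ≤ (Trow k i ε α).card + e α + 1 + jidx i ε α := by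
    intro α h1 h2
    have hinj : Function.Injective fun c => ((i α, c) : ℕ × ℕ) := by
      intro a b h
      simpa using congrArg Prod.snd h
    have hTc : (Trow k i ε α).card = ((Finset.Ioo (jidx i ε α) (i α)).filter
        (fun c => ∀ β ∈ Finset.Icc 1 k, c ≠ jidx i ε β)).card := by
      rw [Trow, Finset.card_image_of_injective _ hinj]
    rw [hTc]
    have hIoo : (Finset.Ioo (jidx i ε α) (i α)).card = i α - jidx i ε α - 1 :=
      Nat.card_Ioo _ _
    have hkey : ∀ c, jidx i ε α < c → c < i α →
        ¬ (∀ β ∈ Finset.Icc 1 k, c ≠ jidx i ε β) →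
        α < k ∧ 1 ≤ ε α ∧ c = jidx i ε (α + 1) := by
      intro c hc1 hc2 hcP
      push_neg at hcP
      obtain ⟨β, hβ, hcβ⟩ := hcP
      rw [Finset.mem_Icc] at hβ
      have hαβ : α < β := by
        by_contra hcon
        push_neg at hcon
        have := hjle β α hβ.1 hcon h2
        omega
      have hαk : α < k := lt_of_lt_of_le hαβ hβ.2
      have hβeq : β = α + 1 := by
        by_contra hcon
        have h2' : α + 2 ≤ β := by omega
        have hj2 : jidx i ε (α + 2) ≤ jidx i ε β := hjle _ _ (by omega) h2' hβ.2
        have hc2' := hchain (α + 1) (by omega) (by omega)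
        simp only [Nat.add_sub_cancel] at hc2'
        have hj3 : jidx i ε (α + 2) = i (α + 1) - ε (α + 1) := by simp [jidx]
        omega
      subst hβeq
      have hjα1 : jidx i ε (α + 1) = i α - ε α := by simp [jidx]
      exact ⟨hαk, by omega, hcβ⟩
    set bad : Finset ℕ := if α < k ∧ 1 ≤ ε α then {jidx i ε (α + 1)} else ∅ with hbad
    have hbadcard : bad.card ≤ e α := by
      rw [hbad]
      simp only [he]
      split
      · simp
      · simp
    have hsub2 : Finset.Ioo (jidx i ε α) (i α) ⊆
        ((Finset.Ioo (jidx i ε α) (i α)).filter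
          (fun c => ∀ β ∈ Finset.Icc 1 k, c ≠ jidx i ε β)) ∪ bad := by
      intro c hc
      by_cases hP : ∀ β ∈ Finset.Icc 1 k, c ≠ jidx i ε β
      · apply Finset.mem_union_left
        simp only [Finset.mem_filter]
        exact ⟨hc, hP⟩
      · rw [Finset.mem_Ioo] at hc
        obtain ⟨h1', h2', h3'⟩ := hkey c hc.1 hc.2 hP
        apply Finset.mem_union_right
        rw [hbad, if_pos ⟨h1', h2'⟩, h3']
        exact Finset.mem_singleton_self _
    have hcount := le_trans (Finset.card_le_card hsub2) (Finset.card_union_le _ _)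
    have hjiα := hji α h1 h2
    omega
  -- disjointness within a piece
  have hTSdisj : ∀ α, 1 ≤ α → α ≤ k → Disjoint (Scol i ε α) (Trow k i ε α) := by
    intro α h1 h2
    rw [Finset.disjoint_left]
    intro x hxS hxT
    have h3 := hSmem α x hxS
    have h4 := (hTmem α x hxT).2 α (Finset.mem_Icc.mpr ⟨h1, h2⟩)
    exact h4 h3
  -- pairwise disjointness of pieces
  have hpdisj : ∀ a ∈ Finset.Icc 1 k, ∀ b ∈ Finset.Icc 1 k, a ≠ b →
      Disjoint (Scol i ε a ∪ Trow k i ε a) (Scol i ε b ∪ Trow k i ε b) := by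
    intro a ha b hb hab
    rw [Finset.mem_Icc] at ha hb
    rw [Finset.disjoint_left]
    intro x hxa hxb
    rcases Finset.mem_union.mp hxa with hA | hA <;>
      rcases Finset.mem_union.mp hxb with hB | hB
    · have h1 := hSmem a x hA
      have h2 := hSmem b x hB
      rcases lt_or_gt_of_ne hab with h | h
      · have := hjlt a b ha.1 h hb.2; omega
      · have := hjlt b a hb.1 h ha.2; omega
    · exact (hTmem b x hB).2 a (Finset.mem_Icc.mpr ha) (hSmem a x hA)
    · exact (hTmem a x hA).2 b (Finset.mem_Icc.mpr hb) (hSmem b x hB)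
    · have h1 := (hTmem a x hA).1
      have h2 := (hTmem b x hB).1
      rcases lt_or_gt_of_ne hab with h | h
      · have := hlt a b h hb.2; omega
      · have := hlt b a h ha.2; omega
  -- the subset N
  set N : Finset (ℕ × ℕ) :=
    (Finset.Icc 1 k).biUnion (fun α => Scol i ε α ∪ Trow k i ε α) with hN
  have hNsub : N ⊆ Mset k i ε := by
    intro x hx
    rw [hN, Finset.mem_biUnion] at hx
    obtain ⟨α, hα, hx⟩ := hx
    rw [Mset, Finset.mem_biUnion]
    refine ⟨α, hα, ?_⟩
    rcases Finset.mem_union.mp hx with h | h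
    · exact Finset.mem_union_left _ h
    · apply Finset.mem_union_right
      simp only [Trow, Finset.mem_image, Finset.mem_filter] at h
      obtain ⟨c, ⟨hc1, hc2⟩, rfl⟩ := h
      simp only [Finset.mem_image, Finset.mem_filter]
      refine ⟨c, ⟨hc1, ?_⟩, rfl⟩
      intro β hβ hcon
      rw [Finset.mem_Ico] at hβ
      rw [Finset.mem_Icc] at hα
      exact hc2 β (Finset.mem_Icc.mpr ⟨hβ.1, le_trans (le_of_lt hβ.2) hα.2⟩) hcon.2
  have hNcard : N.card =
      ∑ α ∈ Finset.Icc 1 k, ((Scol i ε α).card + (Trow k i ε α).card) := by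
    rw [hN, Finset.card_biUnion hpdisj]
    refine Finset.sum_congr rfl ?_
    intro α hα
    rw [Finset.mem_Icc] at hα
    exact Finset.card_union_of_disjoint (hTSdisj α hα.1 hα.2)
  -- pointwise lower bound
  have hptwise : ∀ α ∈ Finset.Icc 1 k,
      2 * i α ≤ ((Scol i ε α).card + (Trow k i ε α).card) + e α + 2 * jidx i ε α := by
    intro α hα
    rw [Finset.mem_Icc] at hα
    have h1 := hScard α
    have h2 := hTcard α hα.1 hα.2
    have h3 := hji α hα.1 hα.2
    omega
  have hsum1 : ∑ α ∈ Finset.Icc 1 k, 2 * i α ≤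
      ∑ α ∈ Finset.Icc 1 k, (((Scol i ε α).card + (Trow k i ε α).card) + e α + 2 * jidx i ε α) :=
    Finset.sum_le_sum hptwise
  -- telescoping identity
  have htel : ∀ m, m ≤ k → ∑ α ∈ Finset.Icc 1 m, i α =
      (∑ α ∈ Finset.Icc 1 m, jidx i ε α) + (i m - 1) + ∑ α ∈ Finset.Icc 1 m, ε (α - 1) := by
    intro m
    induction m with
    | zero => intro _; simp [hi0]
    | succ m ih =>
      intro hmk
      have ihm := ih (by omega)
      rw [Finset.sum_Icc_succ_top (by omega : 1 ≤ m + 1),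
          Finset.sum_Icc_succ_top (by omega : 1 ≤ m + 1),
          Finset.sum_Icc_succ_top (by omega : 1 ≤ m + 1)]
      have hjm1 : jidx i ε (m + 1) = i m - ε m := by simp [jidx]
      have hεm : ε m ≤ i m := hεi m (by omega)
      have him : i m ≤ i (m + 1) := hle m (m + 1) (by omega) hmk
      have hi1 : 1 ≤ i m := by
        have := hle 0 m (by omega) (by omega); omega
      simp only [Nat.add_sub_cancel]
      omega
  -- reindexing lemmas for sums of ε
  have hsh : ∀ m, ∑ α ∈ Finset.Icc 1 m, ε (α - 1) = ∑ α ∈ Finset.range m, ε α := by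
    intro m
    induction m with
    | zero => simp
    | succ m ih =>
      rw [Finset.sum_Icc_succ_top (by omega : 1 ≤ m + 1), Finset.sum_range_succ, ih]
      simp
  have hsh2 : ∀ m, ∑ α ∈ Finset.range (m + 1), ε α = (∑ α ∈ Finset.Icc 1 m, ε α) + ε 0 := by
    intro m
    induction m with
    | zero => simp
    | succ m ih =>
      rw [Finset.sum_range_succ, Finset.sum_Icc_succ_top (by omega : 1 ≤ m + 1), ih]
      ring
  -- bound the e-sum
  have hesum : ∑ α ∈ Finset.Icc 1 k, e α ≤ ∑ α ∈ Finset.Icc 1 (k - 1), ε α := by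
    have hksplit : Finset.Icc 1 k = Finset.Icc 1 (k - 1 + 1) := by
      congr 1; omega
    have hek : e k = 0 := by simp [he]
    rw [hksplit, Finset.sum_Icc_succ_top (by omega : 1 ≤ k - 1 + 1)]
    have hk1 : k - 1 + 1 = k := by omega
    rw [hk1, hek, add_zero]
    apply Finset.sum_le_sum
    intro α hα
    show (if α < k ∧ 1 ≤ ε α then 1 else 0) ≤ ε α
    split
    · next h => exact h.2
    · exact Nat.zero_le _
  -- the special index gives the sum of ε at least 2
  obtain ⟨α0, hα01, hα0k, hα0ε⟩ := hε
  have hεsum2 : 2 ≤ ∑ α ∈ Finset.Icc 1 (k - 1), ε α := by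
    have hmem : α0 ∈ Finset.Icc 1 (k - 1) := Finset.mem_Icc.mpr ⟨hα01, by omega⟩
    calc 2 ≤ ε α0 := hα0ε
    _ ≤ ∑ α ∈ Finset.Icc 1 (k - 1), ε α :=
      Finset.single_le_sum (fun _ _ => Nat.zero_le _) hmem
  -- assemble
  have hC : ∑ α ∈ Finset.Icc 1 k, ε (α - 1) = ∑ α ∈ Finset.Icc 1 (k - 1), ε α := by
    rw [hsh]
    have h1 := hsh2 (k - 1)
    have h2 : k - 1 + 1 = k := by omega
    rw [h2] at h1
    rw [h1, hε0, add_zero]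
  have hn2 : 2 ≤ n := by
    have := hlt 0 k hk le_rfl
    omega
  -- split the big sum
  rw [Finset.sum_add_distrib, Finset.sum_add_distrib] at hsum1
  rw [← Finset.mul_sum, ← Finset.mul_sum] at hsum1
  have htelk := htel k le_rfl
  rw [hik] at htelk
  have hfin : 2 * n ≤ N.card := by
    rw [hNcard]
    omega
  have hle' := Finset.card_le_card hNsub
  omega
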